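/- Suppose the evolution family T admits a ρ-dichotomy with respect to norms ‖·‖_t with projections P(t) and constants λ, D. If x : [0,∞) → X is continuous with sup_{t≥0} ‖x(t)‖_t < ∞, x(0) ∈ Ker P(0), and x(t) = T(t,s)x(s) for all t ≥ s ≥ 0, then x ≡ 0. -/

import Mathlib

open Set Filter

/-- Suppose the evolution family `T` admits a ρ-dichotomy with respect to norms `N t`
with projections `P t` and constants λ, D (with `Tm t s`, for `t ≤ s`, the inverse on
kernels, i.e. `T(t,s)(Id−P(s))`). If `x : [0,∞) → X` is continuous with
`sup_{t≥0} N t (x t) < ∞`, `x(0) ∈ Ker P(0)` and `x(t) = T(t,s)x(s)` for all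
`t ≥ s ≥ 0`, then `x ≡ 0` on `[0,∞)`. -/
theorem stmt6 {X : Type*} [NormedAddCommGroup X] [NormedSpace ℝ X] [CompleteSpace X]
    (T : ℝ → ℝ → X →L[ℝ] X) (Tm : ℝ → ℝ → X →L[ℝ] X) (P : ℝ → X →L[ℝ] X)
    (N : ℝ → X → ℝ)
    (ρ : ℝ → ℝ) (hmono : StrictMonoOn ρ (Ici 0)) (hρ0 : ρ 0 = 0)
    (hρtop : Tendsto ρ atTop atTop)
    (l D : ℝ) (hl : 0 < l) (hD : 0 < D)
    -- norms dominate `‖·‖`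
    (hN_low : ∀ t ≥ (0:ℝ), ∀ v : X, ‖v‖ ≤ N t v)
    -- projections commute with the family
    (hcomm : ∀ s t, 0 ≤ s → s ≤ t → ∀ v, T t s (P s v) = P t (T t s v))
    -- `Tm s t` is a left inverse of `T t s` on the kernel of `P s`
    (hTm_inv : ∀ s t, 0 ≤ s → s ≤ t → ∀ v, P s v = 0 →
      Tm s t (T t s v - P t (T t s v)) = v)
    -- unstable dichotomy estimate with respect to the norms `N t`
    (hunst : ∀ t s, 0 ≤ t → t ≤ s → ∀ v,
      N t (Tm t s (v - P s v)) ≤ D * Real.exp (-l * (ρ s - ρ t)) * N s v)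
    -- the function `x`
    (x : ℝ → X) (hx_cont : ContinuousOn x (Ici 0))
    (M : ℝ) (hx_bdd : ∀ t ≥ (0:ℝ), N t (x t) ≤ M)
    (hx_ker : P 0 (x 0) = 0)
    (hx_inv : ∀ s t, 0 ≤ s → s ≤ t → x t = T t s (x s)) :
    ∀ t ≥ (0:ℝ), x t = 0 := by
  -- x stays in the kernel of P
  have hker : ∀ s ≥ (0:ℝ), P s (x s) = 0 := by
    intro s hs
    have := hcomm 0 s le_rfl hs (x 0)
    rw [hx_ker, (T s 0).map_zero] at this
    rw [hx_inv 0 s le_rfl hs, ← this]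
  intro t ht
  -- bound ‖x t‖ for every s ≥ t
  have key : ∀ s, t ≤ s → ‖x t‖ ≤ D * Real.exp (-l * (ρ s - ρ t)) * M := by
    intro s hts
    have hs : (0:ℝ) ≤ s := ht.trans hts
    have hx_rec : x t = Tm t s (x s - P s (x s)) := by
      have := hTm_inv t s ht hts (x t) (hker t ht)
      rw [← hx_inv t s ht hts] at this
      exact this.symm
    calc ‖x t‖ ≤ N t (x t) := hN_low t ht (x t)
      _ = N t (Tm t s (x s - P s (x s))) := by rw [← hx_rec]
      _ ≤ D * Real.exp (-l * (ρ s - ρ t)) * N s (x s) := hunst t s ht hts (x s)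
      _ ≤ D * Real.exp (-l * (ρ s - ρ t)) * M := by
          apply mul_le_mul_of_nonneg_left (hx_bdd s hs)
          positivity
  -- the right-hand side tends to 0 as s → ∞
  have hlim : Tendsto (fun s => D * Real.exp (-l * (ρ s - ρ t)) * M) atTop (nhds 0) := by
    have h1 : Tendsto (fun s => -l * (ρ s - ρ t)) atTop atBot := by
      have : Tendsto (fun s => ρ s - ρ t) atTop atTop := hρtop.atTop_add tendsto_const_nhds
      exact this.atTop_mul_const_of_neg (neg_neg_of_pos hl) |>.congr (by intro s; ring)
    have h2 : Tendsto (fun s => Real.exp (-l * (ρ s - ρ t))) atTop (nhds 0) :=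
      Real.tendsto_exp_atBot.comp h1
    have := (h2.const_mul D).mul_const M
    simpa using this
  have hle : ‖x t‖ ≤ 0 := by
    refine ge_of_tendsto hlim ?_
    filter_upwards [eventually_ge_atTop t] with s hs using key s hs
  exact norm_le_zero_iff.mp hle
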